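/- Let {F_i} (finite family) be a POVM on the bipartite system A × B (each F_i positive semidefinite with Σ_i F_i = I), and let {σ_i} be states on A × B whose marginals are constant: there are fixed matrices τ_A, τ_B with Tr_B(σ_i) = τ_A and Tr_A(σ_i) = τ_B for every i. Then the entanglement-breaking map Λ[ρ] = Σ_i Tr(F_i ρ)·σ_i is a channel and is causal. -/

import Mathlib

open Matrix BigOperators
open scoped Kronecker ComplexOrder

noncomputable section

/-- Partial trace over the `A` factor. -/
def trA {A B : Type*} [Fintype A] (ρ : Matrix (A × B) (A × B) ℂ) : Matrix B B ℂ :=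
  Matrix.of fun b b' => ∑ a, ρ (a, b) (a, b')

/-- Partial trace over the `B` factor. -/
def trB {A B : Type*} [Fintype B] (ρ : Matrix (A × B) (A × B) ℂ) : Matrix A A ℂ :=
  Matrix.of fun a a' => ∑ b, ρ (a, b) (a', b)

/-- A state: positive semidefinite matrix of trace 1. -/
def IsState {n : Type*} [Fintype n] (ρ : Matrix n n ℂ) : Prop :=
  ρ.PosSemidef ∧ ρ.trace = 1

/-- A channel: a map admitting a Kraus representation `Λ[X] = ∑ i, K i * X * (K i)ᴴ`
with `∑ i, (K i)ᴴ * K i = 1` (completely positive and trace-preserving). -/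
def IsChannel {n : Type*} [Fintype n] [DecidableEq n]
    (Λ : Matrix n n ℂ → Matrix n n ℂ) : Prop :=
  ∃ (m : ℕ) (K : Fin m → Matrix n n ℂ),
    (∀ X, Λ X = ∑ i, K i * X * (K i)ᴴ) ∧ (∑ i, (K i)ᴴ * K i = 1)

/-- The induced map `Γ ⊗ id` on the bipartite system, acting blockwise. -/
def tensIdA {A B : Type*} (Γ : Matrix A A ℂ → Matrix A A ℂ)
    (ρ : Matrix (A × B) (A × B) ℂ) : Matrix (A × B) (A × B) ℂ :=
  Matrix.of fun p q => Γ (Matrix.of fun a a' => ρ (a, p.2) (a', q.2)) p.1 q.1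

/-- The induced map `id ⊗ Γ` on the bipartite system, acting blockwise. -/
def tensIdB {A B : Type*} (Γ : Matrix B B ℂ → Matrix B B ℂ)
    (ρ : Matrix (A × B) (A × B) ℂ) : Matrix (A × B) (A × B) ℂ :=
  Matrix.of fun p q => Γ (Matrix.of fun b b' => ρ (p.1, b) (q.1, b')) p.2 q.2

/-- `Λ` is A↛B semicausal: no channel applied by Alice beforehand affects Bob's
reduced output state. -/
def SemicausalAtoB {A B : Type*} [Fintype A] [Fintype B] [DecidableEq A]
    (Λ : Matrix (A × B) (A × B) ℂ → Matrix (A × B) (A × B) ℂ) : Prop :=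
  ∀ ρ : Matrix (A × B) (A × B) ℂ, IsState ρ →
    ∀ Γ : Matrix A A ℂ → Matrix A A ℂ, IsChannel Γ →
      trA (Λ (tensIdA Γ ρ)) = trA (Λ ρ)

/-- `Λ` is A↚B semicausal: no channel applied by Bob beforehand affects Alice's
reduced output state. -/
def SemicausalBtoA {A B : Type*} [Fintype A] [Fintype B] [DecidableEq B]
    (Λ : Matrix (A × B) (A × B) ℂ → Matrix (A × B) (A × B) ℂ) : Prop :=
  ∀ ρ : Matrix (A × B) (A × B) ℂ, IsState ρ →
    ∀ Γ : Matrix B B ℂ → Matrix B B ℂ, IsChannel Γ →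
      trB (Λ (tensIdB Γ ρ)) = trB (Λ ρ)

/-- `Λ` is causal: both A↛B and A↚B semicausal. -/
def Causal {A B : Type*} [Fintype A] [Fintype B] [DecidableEq A] [DecidableEq B]
    (Λ : Matrix (A × B) (A × B) ℂ → Matrix (A × B) (A × B) ℂ) : Prop :=
  SemicausalAtoB Λ ∧ SemicausalBtoA Λ

section AuxLemmas

variable {n : Type*} [Fintype n]

omit [Fintype n] in
private lemma kr1 [DecidableEq n] (S M X : Matrix n n ℂ) [Fintype n]
    (hS : Sᴴ = S) (hM : Mᴴ = M) :
    ∑ j : n, ∑ k : n,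
      (Matrix.of fun p q => S p j * M k q) * X * (Matrix.of fun p q => S p j * M k q)ᴴ
      = (M * M * X).trace • (S * S) := by
  have hMX : (M * M * X).trace = ∑ k, (M * X * M) k k := by
    rw [← Matrix.trace_mul_cycle]; simp [Matrix.trace, Matrix.diag]
  have hS' : ∀ a b, star (S b a) = S a b := fun a b => by rw [← Matrix.conjTranspose_apply, hS]
  have hM' : ∀ a b, star (M b a) = M a b := fun a b => by rw [← Matrix.conjTranspose_apply, hM]
  ext p q
  simp only [Matrix.sum_apply, Matrix.mul_apply, Matrix.conjTranspose_apply,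
    Matrix.of_apply, Matrix.smul_apply, smul_eq_mul, star_mul', hMX, hS', hM']
  simp only [Finset.sum_mul, Finset.mul_sum]
  refine Finset.sum_congr rfl fun x _ => Finset.sum_congr rfl fun x1 _ =>
    Finset.sum_congr rfl fun x2 _ => Finset.sum_congr rfl fun i _ => by ring

omit [Fintype n] in
private lemma kr2 [DecidableEq n] (S M : Matrix n n ℂ) [Fintype n]
    (hS : Sᴴ = S) (hM : Mᴴ = M) :
    ∑ j : n, ∑ k : n,
      (Matrix.of fun p q => S p j * M k q)ᴴ * (Matrix.of fun p q => S p j * M k q)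
      = (S * S).trace • (M * M) := by
  have hS' : ∀ a b, star (S b a) = S a b := fun a b => by rw [← Matrix.conjTranspose_apply, hS]
  have hM' : ∀ a b, star (M b a) = M a b := fun a b => by rw [← Matrix.conjTranspose_apply, hM]
  ext p q
  simp only [Matrix.sum_apply, Matrix.mul_apply, Matrix.conjTranspose_apply,
    Matrix.of_apply, Matrix.smul_apply, smul_eq_mul, star_mul', hS', hM',
    Matrix.trace, Matrix.diag]
  simp only [Finset.sum_mul, Finset.mul_sum]
  rw [Finset.sum_comm]
  refine Finset.sum_congr rfl fun x _ => Finset.sum_congr rfl fun x1 _ =>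
    Finset.sum_congr rfl fun i _ => by ring

private lemma channel_trace [DecidableEq n] {Γ : Matrix n n ℂ → Matrix n n ℂ}
    (h : IsChannel Γ) (X : Matrix n n ℂ) : (Γ X).trace = X.trace := by
  obtain ⟨m, K, hK, hsum⟩ := h
  rw [hK, Matrix.trace_sum]
  have h1 : ∀ i, (K i * X * (K i)ᴴ).trace = ((K i)ᴴ * K i * X).trace := fun i =>
    Matrix.trace_mul_cycle (K i) X (K i)ᴴ
  simp_rw [h1]
  rw [← Matrix.trace_sum, ← Finset.sum_mul, hsum, one_mul]

private lemma trace_prodAB {A B : Type*} [Fintype A] [Fintype B]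
    (ρ : Matrix (A × B) (A × B) ℂ) : ρ.trace = ∑ a, ∑ b, ρ (a, b) (a, b) := by
  rw [Matrix.trace, Fintype.sum_prod_type]; rfl

private lemma trace_prodBA {A B : Type*} [Fintype A] [Fintype B]
    (ρ : Matrix (A × B) (A × B) ℂ) : ρ.trace = ∑ b, ∑ a, ρ (a, b) (a, b) := by
  rw [trace_prodAB]; exact Finset.sum_comm

private lemma tensIdA_trace {A B : Type*} [Fintype A] [Fintype B] [DecidableEq A]
    {Γ : Matrix A A ℂ → Matrix A A ℂ} (hΓ : IsChannel Γ)
    (ρ : Matrix (A × B) (A × B) ℂ) : (tensIdA Γ ρ).trace = ρ.trace := by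
  rw [trace_prodBA, trace_prodBA]
  refine Finset.sum_congr rfl fun b _ => ?_
  have := channel_trace hΓ (Matrix.of fun a a' => ρ (a, b) (a', b))
  simpa [tensIdA, Matrix.trace, Matrix.diag] using this

private lemma tensIdB_trace {A B : Type*} [Fintype A] [Fintype B] [DecidableEq B]
    {Γ : Matrix B B ℂ → Matrix B B ℂ} (hΓ : IsChannel Γ)
    (ρ : Matrix (A × B) (A × B) ℂ) : (tensIdB Γ ρ).trace = ρ.trace := by
  rw [trace_prodAB, trace_prodAB]
  refine Finset.sum_congr rfl fun a _ => ?_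
  have := channel_trace hΓ (Matrix.of fun b b' => ρ (a, b) (a, b'))
  simpa [tensIdB, Matrix.trace, Matrix.diag] using this

open scoped MatrixOrder in
private lemma psd_sqrt_exists {m : Type*} [Fintype m] [DecidableEq m] {P : Matrix m m ℂ}
    (h : P.PosSemidef) : ∃ R : Matrix m m ℂ, Rᴴ = R ∧ R * R = P :=
  ⟨CFC.sqrt P, (CFC.sqrt_nonneg P).posSemidef.1, CFC.sqrt_mul_sqrt_self P h.nonneg⟩

end AuxLemmas

theorem stmt_14 {A B : Type*} [Fintype A] [Fintype B] [DecidableEq A] [DecidableEq B]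
    [Nonempty A] [Nonempty B] {ι : Type*} [Fintype ι]
    (F : ι → Matrix (A × B) (A × B) ℂ)
    (hFpos : ∀ i, (F i).PosSemidef) (hFsum : ∑ i, F i = 1)
    (σ : ι → Matrix (A × B) (A × B) ℂ) (hσ : ∀ i, IsState (σ i))
    (τA : Matrix A A ℂ) (τB : Matrix B B ℂ)
    (hτA : ∀ i, trB (σ i) = τA) (hτB : ∀ i, trA (σ i) = τB) :
    IsChannel (fun X => ∑ i, (F i * X).trace • σ i) ∧
    Causal (fun X => ∑ i, (F i * X).trace • σ i) := by
  classical
  set S : ι → Matrix (A × B) (A × B) ℂ := fun i => Classical.choose (psd_sqrt_exists (hσ i).1) with hSdef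
  set M : ι → Matrix (A × B) (A × B) ℂ := fun i => Classical.choose (psd_sqrt_exists (hFpos i)) with hMdef
  have hSH : ∀ i, (S i)ᴴ = S i := fun i => (Classical.choose_spec (psd_sqrt_exists (hσ i).1)).1
  have hMH : ∀ i, (M i)ᴴ = M i := fun i => (Classical.choose_spec (psd_sqrt_exists (hFpos i))).1
  have hSS : ∀ i, S i * S i = σ i := fun i => (Classical.choose_spec (psd_sqrt_exists (hσ i).1)).2
  have hMM : ∀ i, M i * M i = F i := fun i => (Classical.choose_spec (psd_sqrt_exists (hFpos i))).2
  set K0 : ι × (A × B) × (A × B) → Matrix (A × B) (A × B) ℂ :=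
    fun u => Matrix.of fun p q => S u.1 p u.2.1 * M u.1 u.2.2 q with hK0
  have key1 : ∀ X, ∑ u : ι × (A × B) × (A × B), K0 u * X * (K0 u)ᴴ
      = ∑ i, (F i * X).trace • σ i := by
    intro X
    rw [Fintype.sum_prod_type]
    refine Finset.sum_congr rfl fun i _ => ?_
    rw [Fintype.sum_prod_type]
    calc ∑ j, ∑ k, K0 (i, j, k) * X * (K0 (i, j, k))ᴴ
        = (M i * M i * X).trace • (S i * S i) := kr1 (S i) (M i) X (hSH i) (hMH i)
      _ = (F i * X).trace • σ i := by rw [hSS, hMM]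
  have key2 : ∑ u : ι × (A × B) × (A × B), (K0 u)ᴴ * K0 u = 1 := by
    rw [Fintype.sum_prod_type]
    have h2 : ∀ i, ∑ v : (A × B) × (A × B), (K0 (i, v))ᴴ * K0 (i, v) = F i := by
      intro i
      rw [Fintype.sum_prod_type]
      calc ∑ j, ∑ k, (K0 (i, j, k))ᴴ * K0 (i, j, k)
          = (S i * S i).trace • (M i * M i) := kr2 (S i) (M i) (hSH i) (hMH i)
        _ = F i := by rw [hSS, hMM, (hσ i).2, one_smul]
    simp_rw [h2]; exact hFsum
  have e := Fintype.equivFin (ι × (A × B) × (A × B))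
  have hCh : IsChannel (fun X : Matrix (A × B) (A × B) ℂ => ∑ i, (F i * X).trace • σ i) := by
    refine ⟨Fintype.card (ι × (A × B) × (A × B)), fun t => K0 (e.symm t), fun X => ?_, ?_⟩
    · rw [Equiv.sum_comp e.symm (fun u => K0 u * X * (K0 u)ᴴ), key1]
    · rw [Equiv.sum_comp e.symm (fun u => (K0 u)ᴴ * K0 u), key2]
  have hmarB : ∀ X : Matrix (A × B) (A × B) ℂ,
      trA (∑ i, (F i * X).trace • σ i) = X.trace • τB := by
    intro X
    have hc : ∑ i, (F i * X).trace = X.trace := by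
      rw [← Matrix.trace_sum, ← Finset.sum_mul, hFsum, one_mul]
    ext b b'
    have h1 : ∀ i, ∑ a, σ i (a, b) (a, b') = τB b b' := fun i => by
      have := congrFun (congrFun (hτB i) b) b'
      simpa [trA] using this
    simp only [trA, Matrix.of_apply, Matrix.sum_apply, Matrix.smul_apply, smul_eq_mul]
    rw [Finset.sum_comm]
    simp_rw [← Finset.mul_sum, h1, ← Finset.sum_mul, hc]
  have hmarA : ∀ X : Matrix (A × B) (A × B) ℂ,
      trB (∑ i, (F i * X).trace • σ i) = X.trace • τA := by
    intro X
    have hc : ∑ i, (F i * X).trace = X.trace := by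
      rw [← Matrix.trace_sum, ← Finset.sum_mul, hFsum, one_mul]
    ext a a'
    have h1 : ∀ i, ∑ b, σ i (a, b) (a', b) = τA a a' := fun i => by
      have := congrFun (congrFun (hτA i) a) a'
      simpa [trB] using this
    simp only [trB, Matrix.of_apply, Matrix.sum_apply, Matrix.smul_apply, smul_eq_mul]
    rw [Finset.sum_comm]
    simp_rw [← Finset.mul_sum, h1, ← Finset.sum_mul, hc]
  refine ⟨hCh, ?_, ?_⟩
  · intro ρ hρ Γ hΓ
    simp only [hmarB]
    rw [tensIdA_trace hΓ]
  · intro ρ hρ Γ hΓ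
    simp only [hmarA]
    rw [tensIdB_trace hΓ]
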